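/- For m, n ≥ 1 and 0 ≤ r ≤ m + n − 1: ∑_{k=1}^{n} (-1)^{k-1} [n choose k]_q q^{k(k-1)/2 + k(m−r)} / (1−q^k)^m = ∑_{j=0}^{m} C(r, m−j) · ∑_{k=1}^{n} (-1)^{k-1} [n choose k]_q q^{k(k-1)/2 + kj} / (1−q^k)^j, as rational functions in q. -/

import Mathlib

/-- The q-Pochhammer symbol `(a;q)_n = ∏_{j=0}^{n-1} (1 - a q^j)`. -/
noncomputable def qPoch (a q : ℂ) (n : ℕ) : ℂ := ∏ j ∈ Finset.range n, (1 - a * q ^ j)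

/-- The Gaussian binomial coefficient `[n choose k]_q`. -/
noncomputable def qBinom (q : ℂ) (n k : ℕ) : ℂ :=
  qPoch q q n / (qPoch q q k * qPoch q q (n - k))

section
variable {q : ℂ}

lemma one_sub_pow_ne (hq1 : ∀ j, 1 ≤ j → q ^ j ≠ 1) {j : ℕ} (hj : 1 ≤ j) : (1 - q ^ j) ≠ 0 :=
  sub_ne_zero.2 fun h => hq1 j hj h.symm

lemma one_sub_mul_pow_ne (hq1 : ∀ j, 1 ≤ j → q ^ j ≠ 1) (j : ℕ) : (1 - q * q ^ j) ≠ 0 := by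
  have := one_sub_pow_ne hq1 (j := j+1) (by omega)
  rwa [pow_succ'] at this

lemma qPoch_succ (a : ℂ) (n : ℕ) : qPoch a q (n+1) = qPoch a q n * (1 - a * q ^ n) := by
  simp [qPoch, Finset.prod_range_succ]

lemma qPoch_ne (hq1 : ∀ j, 1 ≤ j → q ^ j ≠ 1) (n : ℕ) : qPoch q q n ≠ 0 := by
  apply Finset.prod_ne_zero_iff.2
  intro j _
  exact one_sub_mul_pow_ne hq1 j

lemma qBinom_zero (hq1 : ∀ j, 1 ≤ j → q ^ j ≠ 1) (n : ℕ) : qBinom q n 0 = 1 := by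
  simp only [qBinom, Nat.sub_zero]
  rw [show qPoch q q 0 = 1 by simp [qPoch], one_mul]
  exact div_self (qPoch_ne hq1 n)

lemma qBinom_self (hq1 : ∀ j, 1 ≤ j → q ^ j ≠ 1) (n : ℕ) : qBinom q n n = 1 := by
  simp only [qBinom, Nat.sub_self]
  rw [show qPoch q q 0 = 1 by simp [qPoch], mul_one]
  exact div_self (qPoch_ne hq1 n)

lemma pascal (hq : q ≠ 0) (hq1 : ∀ j, 1 ≤ j → q ^ j ≠ 1) {n k : ℕ} (hk : k + 1 ≤ n) :
    qBinom q (n+1) (k+1) = qBinom q n (k+1) + q ^ (n-k) * qBinom q n k := by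
  have h1 : n + 1 - (k+1) = n - k := by omega
  have h2 : n - k = (n - k - 1) + 1 := by omega
  have h3 : n - (k+1) = n - k - 1 := by omega
  rw [qBinom, qBinom, qBinom, h1, h3, qPoch_succ q n, qPoch_succ q k]
  rw [h2, qPoch_succ q (n-k-1)]
  have e1 : qPoch q q n ≠ 0 := qPoch_ne hq1 n
  have e2 : qPoch q q k ≠ 0 := qPoch_ne hq1 k
  have e3 : qPoch q q (n-k-1) ≠ 0 := qPoch_ne hq1 (n-k-1)
  have e4 := one_sub_mul_pow_ne hq1 n
  have e5 := one_sub_mul_pow_ne hq1 k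
  have e6 := one_sub_mul_pow_ne hq1 (n-k-1)
  have hn : q ^ n = q ^ k * (q * q ^ (n-k-1)) := by
    rw [← pow_succ', ← pow_add]; congr 1; omega
  rw [Nat.add_sub_cancel, pow_succ', hn]
  field_simp
  ring
end

lemma pascal' (hq : q ≠ 0) (hq1 : ∀ j, 1 ≤ j → q ^ j ≠ 1) {n k : ℕ} (hk : k ≤ n) :
    qBinom q (n+1) (k+1)
      = (if k + 1 ≤ n then qBinom q n (k+1) else 0) + q ^ (n-k) * qBinom q n k := by
  by_cases h : k + 1 ≤ n
  · rw [if_pos h]; exact pascal hq hq1 h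
  · have hkn : k = n := by omega
    subst hkn
    rw [if_neg h, qBinom_self hq1, qBinom_self hq1]
    simp

lemma qbt (hq : q ≠ 0) (hq1 : ∀ j, 1 ≤ j → q ^ j ≠ 1) (n : ℕ) (x : ℂ) :
    ∑ k ∈ Finset.range (n+1), (-1 : ℂ)^k * qBinom q n k * q ^ (k.choose 2) * x ^ k
      = qPoch x q n := by
  induction n with
  | zero =>
      simp [qPoch, qBinom_self hq1 0]
  | succ n ih =>
      rw [Finset.sum_range_succ']
      have step : ∀ i ∈ Finset.range (n+1),
          (-1 : ℂ)^(i+1) * qBinom q (n+1) (i+1) * q ^ ((i+1).choose 2) * x ^ (i+1)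
          = ((-1 : ℂ)^(i+1) * (if i + 1 ≤ n then qBinom q n (i+1) else 0)
                * q ^ ((i+1).choose 2) * x ^ (i+1))
            + ((-x * q ^ n) * ((-1 : ℂ)^i * qBinom q n i * q ^ (i.choose 2) * x ^ i)) := by
        intro i hi
        rw [Finset.mem_range] at hi
        rw [pascal' hq hq1 (by omega)]
        have h2 : (i+1).choose 2 = i.choose 2 + i := by
          rw [Nat.choose_succ_succ, Nat.choose_one_right, Nat.add_comm]
        have hqe : q ^ (n - i) * q ^ ((i+1).choose 2) = q ^ n * q ^ (i.choose 2) := by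
          rw [h2, ← pow_add, ← pow_add]
          congr 1; omega
        linear_combination (-(-1:ℂ)^i * qBinom q n i * x ^ (i+1)) * hqe
      rw [Finset.sum_congr rfl step, Finset.sum_add_distrib, ← Finset.mul_sum, ih]
      have hA : ∑ i ∈ Finset.range (n+1),
          (-1 : ℂ)^(i+1) * (if i + 1 ≤ n then qBinom q n (i+1) else 0)
            * q ^ ((i+1).choose 2) * x ^ (i+1)
          = qPoch x q n - 1 := by
        rw [Finset.sum_range_succ, if_neg (by omega), ← ih, Finset.sum_range_succ']
        simp [qBinom_zero hq1]
        apply Finset.sum_congr rfl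
        intro i hi
        rw [Finset.mem_range] at hi
        rw [if_pos (by omega)]
      rw [hA]
      have h00 : (-1:ℂ)^0 * qBinom q (n+1) 0 * q ^ (Nat.choose 0 2) * x ^ 0 = 1 := by
        simp [qBinom_zero hq1]
      rw [h00, qPoch_succ]
      ring

lemma key (hq : q ≠ 0) (hq1 : ∀ j, 1 ≤ j → q ^ j ≠ 1) {n d : ℕ} (hn : 1 ≤ n)
    (hd : d ≤ n - 1) :
    ∑ k ∈ Finset.Icc 1 n,
      (-1:ℂ)^(k-1) * qBinom q n k * q ^ (k.choose 2) * ((q ^ d)⁻¹) ^ k = 1 := by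
  have h0 : qPoch ((q ^ d)⁻¹) q n = 0 := by
    apply Finset.prod_eq_zero (Finset.mem_range.2 (show d < n by omega))
    rw [inv_mul_cancel₀ (pow_ne_zero d hq)]
    ring
  have hsum := qbt hq hq1 n ((q ^ d)⁻¹)
  rw [h0, Finset.sum_range_succ'] at hsum
  have h00 : (-1:ℂ)^0 * qBinom q n 0 * q ^ (Nat.choose 0 2) * ((q ^ d)⁻¹) ^ 0 = 1 := by
    simp [qBinom_zero hq1]
  rw [h00] at hsum
  rw [← Finset.Ico_add_one_right_eq_Icc, Finset.sum_Ico_eq_sum_range]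
  have : ∀ i ∈ Finset.range (n + 1 - 1),
      (-1:ℂ)^((1+i)-1) * qBinom q n (1+i) * q ^ ((1+i).choose 2) * ((q ^ d)⁻¹) ^ (1+i)
      = -((-1:ℂ)^(i+1) * qBinom q n (i+1) * q ^ ((i+1).choose 2) * ((q ^ d)⁻¹) ^ (i+1)) := by
    intro i _
    rw [Nat.add_comm 1 i, Nat.add_sub_cancel, pow_succ]
    ring
  rw [Finset.sum_congr rfl this, Finset.sum_neg_distrib]
  have hn1 : n + 1 - 1 = n := by omega
  rw [hn1]
  linear_combination -hsum

lemma zero_sum (hq : q ≠ 0) (hq1 : ∀ j, 1 ≤ j → q ^ j ≠ 1) {n l : ℕ} (hn : 1 ≤ n)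
    (hl1 : 1 ≤ l) (hl : l ≤ n - 1) :
    ∑ k ∈ Finset.Icc 1 n,
      (-1:ℂ)^(k-1) * qBinom q n k * q ^ (k.choose 2) * ((1 - q^k)/q^k)^l = 0 := by
  have expand : ∀ k ∈ Finset.Icc 1 n,
      (-1:ℂ)^(k-1) * qBinom q n k * q^(k.choose 2) * ((1 - q^k)/q^k)^l
      = ∑ d ∈ Finset.range (l+1),
          ((-1:ℂ)^(l-d) * (l.choose d)) *
            ((-1:ℂ)^(k-1) * qBinom q n k * q^(k.choose 2) * ((q^d)⁻¹)^k) := by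
    intro k hk
    have hkq : (q : ℂ)^k ≠ 0 := pow_ne_zero k hq
    have hx : (1 - q^k)/q^k = (q^k)⁻¹ + (-1) := by
      field_simp
      ring
    rw [hx, add_pow, Finset.mul_sum]
    apply Finset.sum_congr rfl
    intro d hd
    have hsw : ((q^k)⁻¹)^d = ((q^d)⁻¹)^k := by
      rw [← inv_pow, ← inv_pow, ← pow_mul, ← pow_mul, Nat.mul_comm]
    rw [hsw]; ring
  rw [Finset.sum_congr rfl expand, Finset.sum_comm]
  have inner : ∀ d ∈ Finset.range (l+1),
      (∑ k ∈ Finset.Icc 1 n, ((-1:ℂ)^(l-d) * (l.choose d)) *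
        ((-1:ℂ)^(k-1) * qBinom q n k * q^(k.choose 2) * ((q^d)⁻¹)^k))
      = ((-1:ℂ)^(l-d) * (l.choose d)) := by
    intro d hd
    rw [Finset.mem_range] at hd
    rw [← Finset.mul_sum, key hq hq1 hn (show d ≤ n-1 by omega), mul_one]
  rw [Finset.sum_congr rfl inner]
  have hbin : ∑ d ∈ Finset.range (l+1), ((-1:ℂ)^(l-d) * (l.choose d))
      = ((1:ℂ) + (-1))^l := by
    rw [add_pow]
    apply Finset.sum_congr rfl
    intro d _
    rw [one_pow]; ring
  rw [hbin, show (1:ℂ) + (-1) = 0 by ring, zero_pow (show l ≠ 0 by omega)]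

lemma per_k (x : ℂ) (hx0 : x ≠ 0) (hx1 : (1:ℂ) - x ≠ 0) (m r : ℕ) :
    x ^ ((m:ℤ) - r) / (1-x)^m
      = ∑ s ∈ Finset.range (r+1), (r.choose s : ℂ) * (x/(1-x)) ^ ((m:ℤ) - (s:ℤ)) := by
  set u := x/(1-x) with hu
  have hu0 : u ≠ 0 := div_ne_zero hx0 hx1
  have step : ∀ s ∈ Finset.range (r+1),
      (r.choose s : ℂ) * u ^ ((m:ℤ) - (s:ℤ))
      = u ^ ((m:ℤ) - r) * ((1:ℂ) ^ s * u ^ (r - s) * (r.choose s : ℂ)) := by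
    intro s hs
    rw [Finset.mem_range] at hs
    rw [one_pow]
    have hcast : ((m:ℤ) - s) = ((m:ℤ) - r) + ((r - s : ℕ) : ℤ) := by push_cast; omega
    rw [hcast, zpow_add₀ hu0, zpow_natCast]
    ring
  rw [Finset.sum_congr rfl step, ← Finset.mul_sum, ← add_pow]
  have h1u : (1:ℂ) + u = (1-x)⁻¹ := by rw [hu]; field_simp; ring
  rw [h1u, zpow_sub₀ hx0, zpow_sub₀ hu0, zpow_natCast, zpow_natCast, zpow_natCast,
    zpow_natCast, hu, div_pow, div_pow]
  field_simp
  ring_nf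
  rw [inv_pow, inv_mul_cancel₀ (pow_ne_zero r hx1)]

theorem stmt11 (m n r : ℕ) (hm : 1 ≤ m) (hn : 1 ≤ n) (hr : r ≤ m + n - 1)
    (q : ℂ) (hq : q ≠ 0) (hq1 : ∀ j, 1 ≤ j → q ^ j ≠ 1) :
    ∑ k ∈ Finset.Icc 1 n,
        (-1 : ℂ) ^ (k - 1) * qBinom q n k *
          q ^ (((k * (k - 1) / 2 : ℕ) : ℤ) + (k : ℤ) * ((m : ℤ) - r)) / (1 - q ^ k) ^ m
      = ∑ j ∈ Finset.range (m + 1), (r.choose (m - j) : ℂ) *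
          ∑ k ∈ Finset.Icc 1 n,
            (-1 : ℂ) ^ (k - 1) * qBinom q n k *
              q ^ (k * (k - 1) / 2 + k * j) / (1 - q ^ k) ^ j := by
  have hc2 : ∀ k : ℕ, k * (k - 1) / 2 = k.choose 2 := fun k => (Nat.choose_two_right k).symm
  set S : ℕ → ℂ := fun s => ∑ k ∈ Finset.Icc 1 n,
      (-1:ℂ)^(k-1) * qBinom q n k * q ^ (k.choose 2)
        * (q^k/(1-q^k)) ^ ((m:ℤ)-(s:ℤ)) with hS
  -- LHS
  have hL : (∑ k ∈ Finset.Icc 1 n,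
        (-1 : ℂ) ^ (k - 1) * qBinom q n k *
          q ^ (((k * (k - 1) / 2 : ℕ) : ℤ) + (k : ℤ) * ((m : ℤ) - r)) / (1 - q ^ k) ^ m)
      = ∑ s ∈ Finset.range (r+1), (r.choose s : ℂ) * S s := by
    have step : ∀ k ∈ Finset.Icc 1 n,
        (-1 : ℂ) ^ (k - 1) * qBinom q n k *
          q ^ (((k * (k - 1) / 2 : ℕ) : ℤ) + (k : ℤ) * ((m : ℤ) - r)) / (1 - q ^ k) ^ m
        = ∑ s ∈ Finset.range (r+1), (r.choose s : ℂ) *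
            ((-1:ℂ)^(k-1) * qBinom q n k * q ^ (k.choose 2)
              * (q^k/(1-q^k)) ^ ((m:ℤ)-(s:ℤ))) := by
      intro k hk
      rw [Finset.mem_Icc] at hk
      have hk1 : (1:ℂ) - q^k ≠ 0 := one_sub_pow_ne hq1 hk.1
      have hqk : (q:ℂ)^k ≠ 0 := pow_ne_zero k hq
      have hz : q ^ ((k:ℤ) * ((m:ℤ)-(r:ℤ))) = (q^k) ^ ((m:ℤ)-(r:ℤ)) := by
        rw [← zpow_natCast q k, ← zpow_mul]
      calc (-1 : ℂ) ^ (k - 1) * qBinom q n k *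
          q ^ (((k * (k - 1) / 2 : ℕ) : ℤ) + (k : ℤ) * ((m : ℤ) - r)) / (1 - q ^ k) ^ m
          = ((-1:ℂ)^(k-1) * qBinom q n k * q ^ (k.choose 2))
              * ((q^k) ^ ((m:ℤ)-(r:ℤ)) / (1-q^k)^m) := by
            rw [zpow_add₀ hq, zpow_natCast, hc2, hz]; ring
        _ = _ := by
            rw [per_k (q^k) hqk hk1 m r, Finset.mul_sum]
            exact Finset.sum_congr rfl fun s _ => by ring
    rw [Finset.sum_congr rfl step, Finset.sum_comm]
    apply Finset.sum_congr rfl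
    intro s _
    rw [hS, Finset.mul_sum]
  rw [hL]
  -- RHS
  have hR : ∀ j ∈ Finset.range (m+1),
      (r.choose (m - j) : ℂ) *
        (∑ k ∈ Finset.Icc 1 n,
          (-1 : ℂ) ^ (k - 1) * qBinom q n k *
            q ^ (k * (k - 1) / 2 + k * j) / (1 - q ^ k) ^ j)
      = (fun s => (r.choose s : ℂ) * S s) (m - j) := by
    intro j hj
    rw [Finset.mem_range] at hj
    simp only
    congr 1
    rw [hS]
    apply Finset.sum_congr rfl
    intro k hk
    rw [Finset.mem_Icc] at hk
    have hk1 : (1:ℂ) - q^k ≠ 0 := one_sub_pow_ne hq1 hk.1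
    have hqk : (q:ℂ)^k ≠ 0 := pow_ne_zero k hq
    have he : (m:ℤ) - ((m - j : ℕ):ℤ) = (j:ℤ) := by push_cast [Nat.cast_sub (by omega : j ≤ m)]; omega
    rw [he, zpow_natCast, pow_add, hc2, pow_mul, div_pow]
    ring
  rw [Finset.sum_congr rfl hR]
  rw [Finset.sum_congr rfl (fun x hx => by rw [show m - x = m + 1 - 1 - x by omega] :
    ∀ x ∈ Finset.range (m+1), (fun s => (r.choose s : ℂ) * S s) (m - x)
      = (fun s => (r.choose s : ℂ) * S s) (m + 1 - 1 - x))]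
  rw [Finset.sum_range_reflect (fun s => (r.choose s : ℂ) * S s) (m+1)]
  -- Now: ∑_{s ∈ range (r+1)} C(r,s) * S s = ∑_{s ∈ range (m+1)} C(r,s) * S s
  -- Both equal the sum over range (m+n).
  have hSzero : ∀ s : ℕ, m + 1 ≤ s → s ≤ m + n - 1 → S s = 0 := by
    intro s h1 h2
    have hl : (m:ℤ) - (s:ℤ) = -(((s - m : ℕ)):ℤ) := by push_cast [Nat.cast_sub (by omega : m ≤ s)]; ring
    rw [hS]
    simp only
    have step : ∀ k ∈ Finset.Icc 1 n,
        (-1:ℂ)^(k-1) * qBinom q n k * q ^ (k.choose 2) * (q^k/(1-q^k)) ^ ((m:ℤ)-(s:ℤ))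
        = (-1:ℂ)^(k-1) * qBinom q n k * q ^ (k.choose 2) * ((1 - q^k)/q^k) ^ (s - m) := by
      intro k hk
      rw [hl, zpow_neg, zpow_natCast, ← inv_pow, inv_div]
    rw [Finset.sum_congr rfl step]
    exact zero_sum hq hq1 hn (by omega) (by omega)
  have key1 : ∑ s ∈ Finset.range (r+1), (r.choose s : ℂ) * S s
      = ∑ s ∈ Finset.range (m+n), (r.choose s : ℂ) * S s := by
    apply Finset.sum_subset (Finset.range_subset_range.2 (by omega))
    intro s _ hs
    rw [Finset.mem_range] at hs
    rw [Nat.choose_eq_zero_of_lt (by omega)]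
    simp
  have key2 : ∑ s ∈ Finset.range (m+1), (r.choose s : ℂ) * S s
      = ∑ s ∈ Finset.range (m+n), (r.choose s : ℂ) * S s := by
    apply Finset.sum_subset (Finset.range_subset_range.2 (by omega))
    intro s hs1 hs
    rw [Finset.mem_range] at hs1 hs
    rw [hSzero s (by omega) (by omega)]
    ring
  rw [key1, ← key2]
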